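/- Let p be a prime number and (A,+,∘) a left brace of cardinality p^n with p > n+1, and let a, b ∈ A. Then there exist integers γ_1, …, γ_{p−1} which depend only on the additive group (A,+) (not on a, b and not on the brace multiplication), with γ_1 = 1, such that [a*b] = Σ_{i=1}^{p−1} γ_i·[q_i(a,b)] in A/ann(p^2), where [q_1(a,b)] = [f(a)]⊙[b] and [q_{i+1}(a,b)] = [f(a)]⊙[q_i(a,b)]. -/

import Mathlib

universe u

/-- A left brace: `(A,+)` abelian group, `(A,∘)` a group, with
`a∘(b+c)+a = a∘b+a∘c`. -/
structure LeftBrace (A : Type u) [AddCommGroup A] where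
  circ : A → A → A
  one : A
  inv : A → A
  circ_assoc : ∀ a b c : A, circ (circ a b) c = circ a (circ b c)
  one_circ : ∀ a : A, circ one a = a
  circ_one : ∀ a : A, circ a one = a
  inv_circ : ∀ a : A, circ (inv a) a = one
  circ_add : ∀ a b c : A, circ a (b + c) + a = circ a b + circ a c

/-- `a*b = a∘b - a - b`. -/
def LeftBrace.star {A : Type u} [AddCommGroup A] (B : LeftBrace A) (a b : A) : A :=
  B.circ a b - a - b

/-- `ann(k) = {a : k•a = 0}`, as an additive subgroup. -/
def annSub (A : Type u) [AddCommGroup A] (k : ℕ) : AddSubgroup A where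
  carrier := {a : A | k • a = 0}
  zero_mem' := by simp
  add_mem' := by
    intro a b ha hb
    have ha' : k • a = 0 := ha
    have hb' : k • b = 0 := hb
    show k • (a + b) = 0
    rw [smul_add, ha', hb', add_zero]
  neg_mem' := by
    intro a ha
    have ha' : k • a = 0 := ha
    show k • (-a) = 0
    rw [smul_neg, ha', neg_zero]

/-- The coset `[a]` of `a` in `A/ann(k)`. -/
def qmk {A : Type u} [AddCommGroup A] (k : ℕ) (a : A) : A ⧸ annSub A k :=
  QuotientAddGroup.mk a

/-- Evaluation of a non-associative word under a binary operation `op`,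
substituting `f i` for the variable `i`. -/
def wEval {α : Type*} {β : Type*} (op : β → β → β) (f : α → β) : FreeMagma α → β
  | FreeMagma.of a => f a
  | FreeMagma.mul x y => op (wEval op f x) (wEval op f y)

/-- The list of leaves (occurrences of variables, left to right) of a word. -/
def wLeaves {α : Type*} : FreeMagma α → List α
  | FreeMagma.of a => [a]
  | FreeMagma.mul x y => wLeaves x ++ wLeaves y

/-- The last (rightmost) variable of a word. -/
def wLast {α : Type*} : FreeMagma α → α
  | FreeMagma.of a => a
  | FreeMagma.mul _ y => wLast y

/-- The number of occurrences of the variable `a` in a word. -/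
def wCount {α : Type*} [DecidableEq α] (a : α) : FreeMagma α → ℕ
  | FreeMagma.of b => if b = a then 1 else 0
  | FreeMagma.mul x y => wCount a x + wCount a y

/-- The length (number of variable occurrences) of a word. -/
def wLen {α : Type*} : FreeMagma α → ℕ
  | FreeMagma.of _ => 1
  | FreeMagma.mul x y => wLen x + wLen y

/-- Left-normed product `a₁·(a₂·(⋯(aₘ·b)⋯))`. -/
def leftProd {Q : Type*} (mul : Q → Q → Q) : List Q → Q → Q
  | [], b => b
  | a :: l, b => mul a (leftProd mul l b)

/-- `circPow B a k` is the product of `k` copies of `a` under `∘`. -/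
def circPow {A : Type u} [AddCommGroup A] (B : LeftBrace A) (a : A) : ℕ → A
  | 0 => B.one
  | k + 1 => B.circ a (circPow B a k)

/-- `eSeq B a (i-1)` is `a_i`, where `a_1 = a` and `a_{i+1} = a * a_i`. -/
def eSeq {A : Type u} [AddCommGroup A] (B : LeftBrace A) (a : A) : ℕ → A
  | 0 => a
  | i + 1 => B.star a (eSeq B a i)

/-- `starIter B a b (i-1)` is `e_i`, where `e_1 = a*b` and `e_{i+1} = a*e_i`. -/
def starIter {A : Type u} [AddCommGroup A] (B : LeftBrace A) (a b : A) : ℕ → A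
  | 0 => B.star a b
  | i + 1 => B.star a (starIter B a b i)

/-- `iterOp op u v i` is `u ⊙ (u ⊙ (⋯ (u ⊙ v)))` with `i` applications of `u ⊙ ·`. -/
def iterOp {Q : Type*} (op : Q → Q → Q) (u v : Q) : ℕ → Q
  | 0 => v
  | i + 1 => op u (iterOp op u v i)

/-- `f(a) = Σ_{i=1}^{p−1} (C(p−1,i−1)/i)·e_i` where `e_1 = a`, `e_{i+1} = a*e_i`. -/
def fMap {A : Type u} [AddCommGroup A] (B : LeftBrace A) (p : ℕ) (a : A) : A :=
  ∑ i ∈ Finset.Icc 1 (p - 1), (Nat.choose (p - 1) (i - 1) / i) • eSeq B a (i - 1)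

/-- `braceChainAux B (i-1)` is `A^i`: `A^1 = A`, `A^{i+1}` the additive subgroup
generated by `{x*y : x ∈ A, y ∈ A^i}`. -/
def braceChainAux {A : Type u} [AddCommGroup A] (B : LeftBrace A) : ℕ → AddSubgroup A
  | 0 => ⊤
  | i + 1 => AddSubgroup.closure {z : A | ∃ x : A, ∃ y ∈ braceChainAux B i, z = B.star x y}

/-- `dSeq B a b i = (d_i, d_i')`: `d_0 = a`, `d_0' = b`, `d_{i+1} = d_i + d_i'`,
`d_{i+1}' = d_i * d_i'`. -/
def dSeq {A : Type u} [AddCommGroup A] (B : LeftBrace A) (a b : A) : ℕ → A × A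
  | 0 => (a, b)
  | i + 1 => ((dSeq B a b i).1 + (dSeq B a b i).2, B.star (dSeq B a b i).1 (dSeq B a b i).2)
/-! ### Auxiliary development -/

open Polynomial in
/-- Remainder sequence for inverting `τ = X + higher order` as a power series. -/
noncomputable def rSeq (τ : Polynomial ℤ) : ℕ → Polynomial ℤ
  | 0 => X
  | j + 1 => rSeq τ j - Polynomial.C ((rSeq τ j).coeff (j + 1)) * τ ^ (j + 1)

/-- The universal coefficients `γ_j`. -/
noncomputable def gFun (τ : Polynomial ℤ) (j : ℕ) : ℤ :=
  if j = 0 then 0 else (rSeq τ (j - 1)).coeff j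

lemma gFun_one (τ : Polynomial ℤ) : gFun τ 1 = 1 := by
  simp [gFun, rSeq]

open Polynomial in
lemma xpow_dvd_tau_pow (τ : Polynomial ℤ) (h0 : τ.coeff 0 = 0) (k : ℕ) :
    X ^ k ∣ τ ^ k := by
  have : (X : Polynomial ℤ) ∣ τ := (X_dvd_iff).mpr h0
  exact pow_dvd_pow_of_dvd this k

open Polynomial in
lemma coeff_pow_diag (τ : Polynomial ℤ) (h0 : τ.coeff 0 = 0) (h1 : τ.coeff 1 = 1) (k : ℕ) :
    (τ ^ k).coeff k = 1 := by
  obtain ⟨q, hq⟩ := (X_dvd_iff).mpr h0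
  have hq0 : q.coeff 0 = 1 := by
    have := congrArg (fun f => Polynomial.coeff f 1) hq
    simpa [coeff_X_mul] using this.symm.trans h1
  have hτk : τ ^ k = X ^ k * q ^ k := by rw [hq, mul_pow]
  have hq0k : (q ^ k).coeff 0 = 1 := by
    rw [coeff_zero_eq_eval_zero, eval_pow, ← coeff_zero_eq_eval_zero, hq0, one_pow]
  rw [hτk]
  have h2 := coeff_X_pow_mul (q ^ k) k 0
  rw [zero_add] at h2
  rw [h2, hq0k]

open Polynomial in
lemma rSeq_dvd (τ : Polynomial ℤ) (h0 : τ.coeff 0 = 0) (h1 : τ.coeff 1 = 1) (j : ℕ) :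
    X ^ (j + 1) ∣ rSeq τ j := by
  induction j with
  | zero => simpa [rSeq] using dvd_refl ((X : Polynomial ℤ) ^ 1)
  | succ j ih =>
    rw [X_pow_dvd_iff]
    intro d hd
    have hdvdτ : X ^ (j + 1) ∣ τ ^ (j + 1) := xpow_dvd_tau_pow τ h0 (j + 1)
    have hrc : ∀ e < j + 1, (rSeq τ j).coeff e = 0 := (X_pow_dvd_iff).mp ih
    have hτc : ∀ e < j + 1, (τ ^ (j + 1)).coeff e = 0 := (X_pow_dvd_iff).mp hdvdτ
    show (rSeq τ j - Polynomial.C ((rSeq τ j).coeff (j + 1)) * τ ^ (j + 1)).coeff d = 0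
    rcases Nat.lt_or_ge d (j + 1) with h | h
    · rw [coeff_sub, hrc d h, coeff_C_mul, hτc d h, mul_zero, sub_zero]
    · have hd' : d = j + 1 := by omega
      subst hd'
      rw [coeff_sub, coeff_C_mul, coeff_pow_diag τ h0 h1, mul_one, sub_self]

open Polynomial in
lemma rSeq_telescope (τ : Polynomial ℤ) (M : ℕ) :
    (X : Polynomial ℤ) = rSeq τ M + ∑ j ∈ Finset.Icc 1 M, Polynomial.C (gFun τ j) * τ ^ j := by
  induction M with
  | zero => simp [rSeq]
  | succ M ih =>
    rw [Finset.sum_Icc_succ_top (by omega), ← add_assoc]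
    have hr : rSeq τ (M + 1)
        = rSeq τ M - Polynomial.C ((rSeq τ M).coeff (M + 1)) * τ ^ (M + 1) := rfl
    have hg : gFun τ (M + 1) = (rSeq τ M).coeff (M + 1) := by simp [gFun]
    rw [hr, hg, ih]
    ring

/-- Fixed point lemma: an automorphism of `p`-power order of a nontrivial finite
abelian group of order divisible by `p` has a nonzero fixed point. -/
lemma fix_lemma (p : ℕ) (hp : p.Prime) (A : Type u) [AddCommGroup A] [Finite A]
    [Nontrivial A] (hpA : p ∣ Nat.card A) (g : A ≃+ A) (m : ℕ)
    (hord : ∀ x : A, (⇑g)^[p ^ m] x = x) : ∃ x : A, x ≠ 0 ∧ g x = x := by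
  haveI : Fact p.Prime := ⟨hp⟩
  set gh : Equiv.Perm A := g.toEquiv with hgh
  have hpow : ∀ (j : ℕ) (x : A), (gh ^ j) x = (⇑g)^[j] x := by
    intro j
    induction j with
    | zero => intro x; rfl
    | succ j ih =>
      intro x
      rw [pow_succ, Function.iterate_succ_apply]
      exact ih (g x)
  have hg1 : gh ^ (p ^ m) = 1 := by
    ext x
    rw [hpow]
    exact hord x
  set H := Subgroup.zpowers gh with hH
  have hPG : IsPGroup p H := by
    intro h
    refine ⟨m, Subtype.ext ?_⟩
    rw [Subgroup.coe_pow]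
    obtain ⟨i, hi⟩ := h.2
    rw [← hi, ← zpow_natCast, ← zpow_mul, mul_comm, zpow_mul, zpow_natCast, hg1, one_zpow]
    rfl
  have hmod := IsPGroup.card_modEq_card_fixedPoints (p := p) hPG A
  have h0fix : (0 : A) ∈ MulAction.fixedPoints H A := by
    intro h
    have hK : gh ∈ MulAction.stabilizer (Equiv.Perm A) (0 : A) :=
      MulAction.mem_stabilizer_iff.mpr (map_zero g)
    exact Subgroup.zpowers_le.mpr hK h.2
  have hpfix : p ∣ Nat.card (MulAction.fixedPoints H A) :=
    Nat.modEq_zero_iff_dvd.mp (hmod.symm.trans (Nat.modEq_zero_iff_dvd.mpr hpA))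
  haveI : Nonempty (MulAction.fixedPoints H A) := ⟨⟨0, h0fix⟩⟩
  have hpos : 0 < Nat.card (MulAction.fixedPoints H A) := Nat.card_pos
  have h1lt : 1 < Nat.card (MulAction.fixedPoints H A) :=
    lt_of_lt_of_le hp.one_lt (Nat.le_of_dvd hpos hpfix)
  haveI : Nontrivial (MulAction.fixedPoints H A) := Finite.one_lt_card_iff_nontrivial.mp h1lt
  obtain ⟨y, hy⟩ := exists_ne (⟨0, h0fix⟩ : MulAction.fixedPoints H A)
  refine ⟨(y : A), ?_, ?_⟩
  · intro h0
    exact hy (Subtype.ext h0)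
  · exact y.2 ⟨gh, Subgroup.mem_zpowers gh⟩

/-- Unipotence: an automorphism of `p`-power order of an abelian group of order
dividing `p ^ k` satisfies `(g - 1) ^ k = 0`. -/
lemma nilp_lemma (p : ℕ) (hp : p.Prime) :
    ∀ (k : ℕ) (A : Type u) [AddCommGroup A] (g : A ≃+ A) (m : ℕ),
      Nat.card A ∣ p ^ k → (∀ x : A, (⇑g)^[p ^ m] x = x) →
      ∀ x : A, (fun y => g y - y)^[k] x = 0 := by
  intro k
  induction k with
  | zero =>
    intro A _ g m hcard _ x
    have h1 : Nat.card A = 1 := Nat.dvd_one.mp (by simpa using hcard)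
    haveI : Subsingleton A := (Nat.card_eq_one_iff_unique.mp h1).1
    simpa using Subsingleton.elim x 0
  | succ k ih =>
    intro A _ g m hcard hord x
    haveI : Finite A := Nat.finite_of_card_ne_zero (by
      intro h0
      rw [h0] at hcard
      exact (pow_ne_zero _ hp.ne_zero) (Nat.eq_zero_of_zero_dvd hcard))
    set φ : A →+ A := AddMonoidHom.mk' (fun y => g y - y) (by
      intro u v
      show g (u + v) - (u + v) = (g u - u) + (g v - v)
      rw [map_add]; abel) with hφ
    have hφ_app : ∀ y : A, φ y = g y - y := fun _ => rfl
    have hφg : ∀ y : A, g (φ y) = φ (g y) := by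
      intro y
      rw [hφ_app, hφ_app, map_sub]
    set R := φ.range with hR
    have hmemR : ∀ y : A, φ y ∈ R := fun y => ⟨y, rfl⟩
    have hgR : ∀ y ∈ R, g y ∈ R := by
      rintro _ ⟨z, rfl⟩
      exact ⟨g z, (hφg z).symm⟩
    have hgsR : ∀ y ∈ R, g.symm y ∈ R := by
      rintro _ ⟨z, rfl⟩
      refine ⟨g.symm z, ?_⟩
      apply g.injective
      rw [hφg, g.apply_symm_apply, g.apply_symm_apply]
    set g' : R ≃+ R :=
      { toFun := fun y => ⟨g y, hgR y y.2⟩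
        invFun := fun y => ⟨g.symm y, hgsR y y.2⟩
        left_inv := by intro y; ext; exact g.symm_apply_apply (y : A)
        right_inv := by intro y; ext; exact g.apply_symm_apply (y : A)
        map_add' := by intro u v; ext; push_cast; exact map_add g (u : A) (v : A) } with hg'
    have hg'_coe : ∀ (j : ℕ) (y : R), ((⇑g')^[j] y : A) = (⇑g)^[j] (y : A) := by
      intro j
      induction j with
      | zero => intro y; rfl
      | succ j ihj =>
        intro y
        rw [Function.iterate_succ_apply', Function.iterate_succ_apply']
        show g ((⇑g')^[j] y : A) = _
        rw [ihj]
    have hord' : ∀ y : R, (⇑g')^[p ^ m] y = y := by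
      intro y
      ext
      rw [hg'_coe]
      exact hord y
    have hcardR : Nat.card R ∣ p ^ k := by
      by_cases hs : Subsingleton A
      · haveI : Subsingleton R := ⟨fun u v => Subtype.ext (Subsingleton.elim _ _)⟩
        have : Nat.card R = 1 := Nat.card_eq_one_iff_unique.mpr ⟨inferInstance, ⟨0⟩⟩
        rw [this]; exact one_dvd _
      · haveI : Nontrivial A := not_subsingleton_iff_nontrivial.mp hs
        have hcA1 : Nat.card A ≠ 1 := by
          intro h1
          exact hs (Nat.card_eq_one_iff_unique.mp h1).1
        have hpA : p ∣ Nat.card A := by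
          obtain ⟨j, hj, hje⟩ := (Nat.dvd_prime_pow hp).mp hcard
          rcases Nat.eq_zero_or_pos j with h0 | hposj
          · exact absurd (by rw [hje, h0, pow_zero]) hcA1
          · rw [hje]
            exact dvd_pow_self p hposj.ne'
        obtain ⟨z, hz0, hzfix⟩ := fix_lemma p hp A hpA g m hord
        have hzker : z ∈ φ.ker := by
          rw [AddMonoidHom.mem_ker, hφ_app, hzfix, sub_self]
        have hcardeq : Nat.card A = Nat.card R * Nat.card φ.ker := by
          rw [AddSubgroup.card_eq_card_quotient_mul_card_addSubgroup φ.ker]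
          congr 1
          exact Nat.card_congr (QuotientAddGroup.quotientKerEquivRange φ).toEquiv
        have hkerdvd : Nat.card φ.ker ∣ Nat.card A := Dvd.intro_left _ hcardeq.symm
        have hker1 : Nat.card φ.ker ≠ 1 := by
          intro h1
          haveI := (Nat.card_eq_one_iff_unique.mp h1).1
          exact hz0 (by
            simpa using Subsingleton.elim (⟨z, hzker⟩ : φ.ker) ⟨0, φ.ker.zero_mem⟩)
        have hpker : p ∣ Nat.card φ.ker := by
          obtain ⟨j, hj, hje⟩ := (Nat.dvd_prime_pow hp).mp (hkerdvd.trans hcard)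
          rcases Nat.eq_zero_or_pos j with h0 | hposj
          · exact absurd (by rw [hje, h0, pow_zero]) hker1
          · rw [hje]; exact dvd_pow_self p hposj.ne'
        have hdvd2 : Nat.card R * p ∣ p ^ k * p := by
          calc Nat.card R * p ∣ Nat.card R * Nat.card φ.ker := mul_dvd_mul_left _ hpker
            _ = Nat.card A := hcardeq.symm
            _ ∣ p ^ (k + 1) := hcard
            _ = p ^ k * p := pow_succ p k
        exact (Nat.mul_dvd_mul_iff_right hp.pos).mp hdvd2
    have hres := ih R g' m hcardR hord' ⟨φ x, hmemR x⟩
    have hcoe : ∀ (j : ℕ) (y : R), (((fun w : R => g' w - w)^[j] y : R) : A)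
        = (fun w : A => g w - w)^[j] (y : A) := by
      intro j
      induction j with
      | zero => intro y; rfl
      | succ j ihj =>
        intro y
        rw [Function.iterate_succ_apply', Function.iterate_succ_apply']
        show ((g' ((fun w : R => g' w - w)^[j] y) - (fun w : R => g' w - w)^[j] y : R) : A) = _
        rw [← ihj]
        rfl
    have hfin := congrArg (Subtype.val) hres
    rw [hcoe] at hfin
    rw [Function.iterate_succ_apply]
    exact hfin

namespace LeftBrace
variable {A : Type u} [AddCommGroup A] (B : LeftBrace A)

/-- Type synonym carrying the circle group structure. -/
def Circ (_B : LeftBrace A) := A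

instance : Mul B.Circ := ⟨B.circ⟩
instance : One B.Circ := ⟨B.one⟩
instance : Inv B.Circ := ⟨B.inv⟩
instance : Group B.Circ := Group.ofLeftAxioms B.circ_assoc B.one_circ B.inv_circ

lemma circ_inv (a : A) : B.circ a (B.inv a) = B.one := mul_inv_cancel (G := B.Circ) a

lemma one_eq_zero : B.one = (0 : A) := by
  have h1 : B.circ B.one 0 = B.one := by
    have := B.circ_add B.one 0 0
    simpa using
      (by simpa using this : B.circ B.one 0 + B.one = B.circ B.one 0 + B.circ B.one 0).symm
  have h2 : B.circ B.one 0 = 0 := B.one_circ 0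
  rw [← h1, h2]

/-- `λ_a` as a `ℤ`-linear endomorphism. -/
def lam (a : A) : Module.End ℤ A :=
  (AddMonoidHom.mk' (fun x => B.circ a x - a) (by
    intro x y
    have h := B.circ_add a x y
    show B.circ a (x + y) - a = (B.circ a x - a) + (B.circ a y - a)
    have h2 : B.circ a (x + y) = B.circ a x + B.circ a y - a := by
      rw [← h]; abel
    rw [h2]; abel)).toIntLinearMap

@[simp] lemma lam_apply (a x : A) : B.lam a x = B.circ a x - a := rfl

lemma lam_circ (a b : A) (x : A) : B.lam (B.circ a b) x = B.lam a (B.lam b x) := by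
  have h := map_sub (B.lam a) (B.circ b x) b
  simp only [lam_apply] at h ⊢
  rw [h, B.circ_assoc]; abel

lemma lam_one (x : A) : B.lam B.one x = x := by
  rw [lam_apply, B.one_circ, B.one_eq_zero, sub_zero]

lemma star_eq_lam (a x : A) : B.star a x = (B.lam a - 1) x := by
  show B.circ a x - a - x = (B.lam a) x - (1 : Module.End ℤ A) x
  rw [lam_apply, Module.End.one_apply]

end LeftBrace

lemma circPow_eq_pow {A : Type u} [AddCommGroup A] (B : LeftBrace A) (a : A) (k : ℕ) :
    circPow B a k = (show B.Circ from a) ^ k := by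
  induction k with
  | zero => rfl
  | succ k ih =>
    show B.circ a (circPow B a k) = _
    rw [ih, pow_succ']
    rfl

lemma circPow_card {A : Type u} [AddCommGroup A] (B : LeftBrace A) (a : A) :
    circPow B a (Nat.card A) = B.one := by
  rw [circPow_eq_pow]
  exact pow_card_eq_one' (G := B.Circ)

lemma lam_circPow {A : Type u} [AddCommGroup A] (B : LeftBrace A) (a : A) (k : ℕ) (x : A) :
    B.lam (circPow B a k) x = ((B.lam a) ^ k) x := by
  induction k with
  | zero =>
    show B.lam B.one x = _
    rw [B.lam_one, pow_zero, Module.End.one_apply]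
  | succ k ih =>
    show B.lam (B.circ a (circPow B a k)) x = _
    rw [B.lam_circ, ih, pow_succ', Module.End.mul_apply]

lemma hockey (i : ℕ) : ∀ k : ℕ, (∑ j ∈ Finset.range k, j.choose i) = k.choose (i + 1) := by
  intro k
  induction k with
  | zero => simp
  | succ k ih =>
    rw [Finset.sum_range_succ, ih, Nat.choose_succ_succ]
    exact Nat.add_comm _ _


/-- there are integers `γ_1,…,γ_{p−1}` depending only on the additive group
`(A,+)`, with `γ_1 = 1`, such that `[a*b] = Σ_{i=1}^{p−1} γ_i·[q_i(a,b)]` in `A/ann(p²)`,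
where `[q_1(a,b)] = [f(a)]⊙[b]` and `[q_{i+1}(a,b)] = [f(a)]⊙[q_i(a,b)]`. -/
theorem stmt_6 (p n : ℕ) (hp : p.Prime) (hpn : n + 1 < p)
    (A : Type u) [AddCommGroup A] (hcard : Nat.card A = p ^ n) :
    ∃ g : ℕ → ℤ, g 1 = 1 ∧
      ∀ (B : LeftBrace A)
        (odot : (A ⧸ annSub A (p ^ 2)) → (A ⧸ annSub A (p ^ 2)) → (A ⧸ annSub A (p ^ 2))),
        (∀ a b c : A, p • c = B.star (p • a) b →
          odot (qmk (p ^ 2) a) (qmk (p ^ 2) b) = qmk (p ^ 2) c) →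
        ∀ a b : A,
          qmk (p ^ 2) (B.star a b) = ∑ i ∈ Finset.Icc 1 (p - 1),
            g i • iterOp odot (qmk (p ^ 2) (fMap B p a)) (qmk (p ^ 2) b) i := by
  have hp2 : 2 ≤ p := hp.two_le
  set c : ℕ → ℕ := fun i => Nat.choose (p - 1) (i - 1) / i with hcdef
  set τ : Polynomial ℤ := ∑ i ∈ Finset.Icc 1 (p - 1), (c i : ℤ) • Polynomial.X ^ i with hτdef
  have hc1 : c 1 = 1 := by simp [hcdef]
  have hτ0 : τ.coeff 0 = 0 := by
    rw [hτdef, Polynomial.finset_sum_coeff]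
    apply Finset.sum_eq_zero
    intro i hi
    have hi1 : 1 ≤ i := (Finset.mem_Icc.mp hi).1
    rw [Polynomial.coeff_smul, Polynomial.coeff_X_pow, if_neg (by omega)]
    simp
  have hτ1 : τ.coeff 1 = 1 := by
    rw [hτdef, Polynomial.finset_sum_coeff]
    rw [Finset.sum_eq_single 1]
    · rw [Polynomial.coeff_smul, Polynomial.coeff_X_pow, if_pos rfl, hc1]
      simp
    · intro i _ hne
      rw [Polynomial.coeff_smul, Polynomial.coeff_X_pow, if_neg (fun h => hne h.symm)]
      simp
    · intro h1
      exact absurd (Finset.mem_Icc.mpr ⟨le_refl 1, by omega⟩) h1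
  refine ⟨gFun τ, gFun_one τ, ?_⟩
  intro B odot hodot a b
  haveI : Finite A := Nat.finite_of_card_ne_zero (by
    rw [hcard]; exact pow_ne_zero n hp.ne_zero)
  have hc : ∀ i, 1 ≤ i → i ≤ p - 1 → p * c i = p.choose i := by
    intro i hi1 hi2
    have key : p * Nat.choose (p - 1) (i - 1) = p.choose i * i := by
      have h := Nat.add_one_mul_choose_eq (p - 1) (i - 1)
      have e1 : p - 1 + 1 = p := by omega
      have e2 : i - 1 + 1 = i := by omega
      simpa [Nat.succ_eq_add_one, e1, e2] using h
    have hco : Nat.Coprime i p := by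
      have hnd : ¬ p ∣ i := by
        intro hdp
        have := Nat.le_of_dvd (by omega) hdp
        omega
      exact Nat.coprime_comm.mp ((hp.coprime_iff_not_dvd).mpr hnd)
    have hdvd : i ∣ Nat.choose (p - 1) (i - 1) := by
      refine hco.dvd_of_dvd_mul_left ?_
      rw [key]
      exact dvd_mul_left i (p.choose i)
    show p * (Nat.choose (p - 1) (i - 1) / i) = p.choose i
    rw [← Nat.mul_div_assoc p hdvd, key, Nat.mul_div_cancel _ (by omega : 0 < i)]
  -- endomorphism setup
  set L : Module.End ℤ A := B.lam a with hLdef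
  set σ : Module.End ℤ A := L - 1 with hσdef
  have hLσ : L = σ + 1 := by rw [hσdef, sub_add_cancel]
  have hσapp : ∀ x : A, σ x = B.star a x := by
    intro x
    rw [hσdef, hLdef, ← B.star_eq_lam]
  -- nilpotency of σ
  have hli : ∀ x, B.lam (B.inv a) (B.lam a x) = x := fun x => by
    rw [← B.lam_circ, B.inv_circ, B.lam_one]
  have hri : ∀ x, B.lam a (B.lam (B.inv a) x) = x := fun x => by
    rw [← B.lam_circ, B.circ_inv, B.lam_one]
  set gE : A ≃+ A :=
    { toFun := fun x => B.lam a x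
      invFun := fun x => B.lam (B.inv a) x
      left_inv := hli
      right_inv := hri
      map_add' := map_add _ } with hgE
  have hgEapp : ∀ x, gE x = B.lam a x := fun _ => rfl
  have hiterlam : ∀ (k : ℕ) (x : A), (⇑gE)^[k] x = B.lam (circPow B a k) x := by
    intro k
    induction k with
    | zero => intro x; rw [Function.iterate_zero_apply]; exact (B.lam_one x).symm
    | succ k ih =>
      intro x
      rw [Function.iterate_succ_apply', ih]
      show B.lam a (B.lam (circPow B a k) x) = B.lam (circPow B a (k + 1)) x
      rw [← B.lam_circ]
      rfl
  have hord : ∀ x : A, (⇑gE)^[p ^ n] x = x := by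
    intro x
    rw [hiterlam, ← hcard, circPow_card, B.lam_one]
  have hnil0 := nilp_lemma p hp n A gE n (by rw [hcard]) hord
  have hσpow : ∀ (k : ℕ) (x : A), (σ ^ k) x = (fun y => gE y - y)^[k] x := by
    intro k
    induction k with
    | zero => intro x; rw [pow_zero, Module.End.one_apply, Function.iterate_zero_apply]
    | succ k ih =>
      intro x
      rw [pow_succ', Module.End.mul_apply, ih, Function.iterate_succ_apply']
      show σ _ = gE _ - _
      rw [hσdef, LinearMap.sub_apply, Module.End.one_apply, hgEapp, hLdef]
  have hσn : (σ ^ n : Module.End ℤ A) = 0 := by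
    ext x
    simp only [LinearMap.zero_apply]
    rw [hσpow]
    exact hnil0 x
  have hσbig : ∀ k, n ≤ k → (σ ^ k : Module.End ℤ A) = 0 := by
    intro k hk
    have hsplit : σ ^ k = σ ^ n * σ ^ (k - n) := by
      rw [← pow_add]
      congr 1
      omega
    rw [hsplit, hσn, zero_mul]
  -- eSeq
  have heSeq : ∀ i : ℕ, eSeq B a i = (σ ^ i) a := by
    intro i
    induction i with
    | zero => rw [pow_zero, Module.End.one_apply]; rfl
    | succ i ih =>
      show B.star a (eSeq B a i) = _
      rw [ih, ← hσapp, pow_succ', Module.End.mul_apply]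
  -- binomial expansion of L ^ j
  have hLpow : ∀ j : ℕ, (L ^ j : Module.End ℤ A)
      = ∑ i ∈ Finset.range (j + 1), (j.choose i) • σ ^ i := by
    intro j
    rw [hLσ, (Commute.one_right σ).add_pow j]
    apply Finset.sum_congr rfl
    intro i _
    rw [one_pow, mul_one, ← (Nat.cast_commute (j.choose i) (σ ^ i)).eq, ← nsmul_eq_mul]
  have hLpow_a : ∀ j : ℕ, j < p → (L ^ j) a
      = ∑ i ∈ Finset.range p, (j.choose i) • (σ ^ i) a := by
    intro j hj
    rw [hLpow j, LinearMap.sum_apply]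
    simp only [LinearMap.smul_apply]
    apply Finset.sum_subset (Finset.range_subset_range.mpr (by omega))
    intro x hx hnx
    rw [Finset.mem_range] at hx hnx
    rw [Nat.choose_eq_zero_of_lt (by omega), zero_smul]
  have hcircPow_sum : ∀ k : ℕ, circPow B a k = ∑ j ∈ Finset.range k, (L ^ j) a := by
    intro k
    induction k with
    | zero => rw [Finset.range_zero, Finset.sum_empty]; exact B.one_eq_zero
    | succ k ih =>
      show B.circ a (circPow B a k) = _
      have hcirc : B.circ a (circPow B a k) = L (circPow B a k) + a := by
        rw [hLdef, B.lam_apply]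
        abel
      rw [hcirc, ih, map_sum, Finset.sum_range_succ']
      congr 1
      · apply Finset.sum_congr rfl
        intro j _
        rw [pow_succ', Module.End.mul_apply]
  have hps : p - 1 + 1 = p := by omega
  have hIcc : Finset.Icc 1 (p - 1) = Finset.Ico 1 p := by
    rw [← Finset.Ico_add_one_right_eq_Icc, hps]
  have hcircPow_p : circPow B a p
      = ∑ i ∈ Finset.range p, (p.choose (i + 1)) • (σ ^ i) a := by
    rw [hcircPow_sum p]
    rw [Finset.sum_congr rfl (fun j hj => hLpow_a j (Finset.mem_range.mp hj))]
    rw [Finset.sum_comm]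
    apply Finset.sum_congr rfl
    intro i _
    rw [← Finset.sum_smul, hockey i p]
  have hfMapeq : fMap B p a = ∑ i ∈ Finset.Icc 1 (p - 1), c i • (σ ^ (i - 1)) a := by
    show (∑ i ∈ Finset.Icc 1 (p - 1),
        (Nat.choose (p - 1) (i - 1) / i) • eSeq B a (i - 1)) = _
    apply Finset.sum_congr rfl
    intro i _
    rw [heSeq]
  have hfMap : p • fMap B p a = circPow B a p := by
    rw [hfMapeq, Finset.smul_sum, hcircPow_p]
    have hL2 : ∀ i ∈ Finset.Icc 1 (p - 1),
        p • (c i • (σ ^ (i - 1)) a) = (p.choose i) • (σ ^ (i - 1)) a := by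
      intro i hi
      obtain ⟨h1, h2⟩ := Finset.mem_Icc.mp hi
      rw [smul_smul, hc i h1 h2]
    rw [Finset.sum_congr rfl hL2, hIcc, Finset.sum_Ico_eq_sum_range]
    rw [show Finset.range p = Finset.range (p - 1 + 1) by rw [hps], Finset.sum_range_succ]
    have hlast : (p.choose (p - 1 + 1)) • (σ ^ (p - 1)) a = 0 := by
      rw [hσbig (p - 1) (by omega), LinearMap.zero_apply, smul_zero]
    rw [hlast, add_zero]
    apply Finset.sum_congr rfl
    intro k _
    have e3 : 1 + k - 1 = k := by omega
    rw [e3, Nat.add_comm 1 k]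
  have hstar_pf : ∀ x : A, B.star (p • fMap B p a) x = (L ^ p) x - x := by
    intro x
    rw [hfMap]
    show B.circ (circPow B a p) x - circPow B a p - x = _
    rw [← B.lam_apply, lam_circPow, hLdef]
  -- the operator T
  set T : Module.End ℤ A := Polynomial.aeval σ τ with hTdef
  have hTsum : T = ∑ i ∈ Finset.Icc 1 (p - 1), (c i : ℤ) • σ ^ i := by
    rw [hTdef, hτdef, map_sum]
    apply Finset.sum_congr rfl
    intro i _
    rw [map_zsmul, map_pow, Polynomial.aeval_X]
  have hpT : ∀ x : A, p • (T x) = B.star (p • fMap B p a) x := by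
    intro x
    rw [hstar_pf, hLpow p, LinearMap.sum_apply]
    simp only [LinearMap.smul_apply]
    rw [Finset.sum_range_succ']
    simp only [pow_zero, Module.End.one_apply, Nat.choose_zero_right, one_smul]
    rw [add_sub_cancel_right]
    rw [show Finset.range p = Finset.range (p - 1 + 1) by rw [hps], Finset.sum_range_succ]
    have hlast : (p.choose (p - 1 + 1)) • (σ ^ (p - 1 + 1)) x = 0 := by
      rw [hσbig (p - 1 + 1) (by omega), LinearMap.zero_apply, smul_zero]
    rw [hlast, add_zero]
    rw [hTsum, LinearMap.sum_apply, Finset.smul_sum]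
    simp only [LinearMap.smul_apply]
    rw [hIcc, Finset.sum_Ico_eq_sum_range]
    apply Finset.sum_congr rfl
    intro k hk
    rw [Finset.mem_range] at hk
    rw [natCast_zsmul, smul_smul, hc (1 + k) (by omega) (by omega), Nat.add_comm 1 k]
  have hodotT : ∀ x : A, odot (qmk (p ^ 2) (fMap B p a)) (qmk (p ^ 2) x)
      = qmk (p ^ 2) (T x) :=
    fun x => hodot _ _ _ (hpT x)
  have hiterOp : ∀ j : ℕ, iterOp odot (qmk (p ^ 2) (fMap B p a)) (qmk (p ^ 2) b) j
      = qmk (p ^ 2) ((T ^ j) b) := by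
    intro j
    induction j with
    | zero => rw [pow_zero, Module.End.one_apply]; rfl
    | succ j ih =>
      show odot _ (iterOp odot _ _ j) = _
      rw [ih, hodotT, pow_succ' T j, Module.End.mul_apply]
  obtain ⟨h, hh⟩ := rSeq_dvd τ hτ0 hτ1 (p - 1)
  have haeval_r : Polynomial.aeval σ (rSeq τ (p - 1)) = 0 := by
    rw [hh, map_mul, map_pow, Polynomial.aeval_X, hσbig (p - 1 + 1) (by omega), zero_mul]
  have hσsum : σ = ∑ j ∈ Finset.Icc 1 (p - 1), (gFun τ j) • T ^ j := by
    have h2 := congrArg (⇑(Polynomial.aeval (R := ℤ) σ)) (rSeq_telescope τ (p - 1))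
    rw [Polynomial.aeval_X, map_add, haeval_r, zero_add, map_sum] at h2
    rw [h2]
    apply Finset.sum_congr rfl
    intro j _
    rw [map_mul, map_pow, Polynomial.aeval_C, ← Algebra.smul_def]
  have hq : ∀ y : A, qmk (p ^ 2) y = QuotientAddGroup.mk' (annSub A (p ^ 2)) y :=
    fun _ => rfl
  calc qmk (p ^ 2) (B.star a b) = qmk (p ^ 2) (σ b) := by rw [← hσapp]
    _ = qmk (p ^ 2) ((∑ j ∈ Finset.Icc 1 (p - 1), (gFun τ j) • T ^ j) b) := by
        rw [← hσsum]
    _ = ∑ j ∈ Finset.Icc 1 (p - 1), (gFun τ j) • qmk (p ^ 2) ((T ^ j) b) := by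
        rw [LinearMap.sum_apply, hq, map_sum]
        apply Finset.sum_congr rfl
        intro j _
        rw [LinearMap.smul_apply, map_zsmul, ← hq]
    _ = ∑ j ∈ Finset.Icc 1 (p - 1),
          (gFun τ j) • iterOp odot (qmk (p ^ 2) (fMap B p a)) (qmk (p ^ 2) b) j := by
        apply Finset.sum_congr rfl
        intro j _
        rw [hiterOp]
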